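/- Let r : [0,1] → [0,1] be a continuous nondecreasing function with r(0) = 0 and r(1) = 1, and let r⁻¹ be its inverse (assume r strictly increasing so that r⁻¹ exists). Then ∫₀¹ (r(x) − x)² dx = ∫₀¹ (r⁻¹(x) − x)² dx. In particular, the asymptotic Wasserstein quantile test is symmetric: ∫₀¹ (F(G⁻¹(x)) − x)² dx = ∫₀¹ (G(F⁻¹(x)) − x)² dx for continuous strictly increasing CDFs F, G on a common interval. -/

import Mathlib

open intervalIntegral

open MeasureTheory in
/-- Key substitution identity: for a monotone bijection `r` of `[0,1]` with inverse `rinv`,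
`∫₀¹ rinv(y)² dy = 1 - 2 ∫₀¹ t r(t) dt`.  Proved by Fubini, no differentiability needed. -/
lemma wqt_key (r rinv : ℝ → ℝ)
    (hrm : StrictMonoOn r (Set.Icc 0 1))
    (hmaps : Set.MapsTo r (Set.Icc 0 1) (Set.Icc 0 1))
    (hinv2 : ∀ y ∈ Set.Icc (0:ℝ) 1, r (rinv y) = y)
    (hrimaps : Set.MapsTo rinv (Set.Icc 0 1) (Set.Icc 0 1)) :
    ∫ y in (0:ℝ)..1, rinv y ^ 2 = 1 - 2 * ∫ t in (0:ℝ)..1, t * r t := by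
  set μ : Measure ℝ := volume.restrict (Set.Ioc 0 1) with hμ
  set R : ℝ → ℝ := fun t => r (max 0 (min t 1)) with hR
  have hclamp : ∀ t : ℝ, max 0 (min t 1) ∈ Set.Icc (0:ℝ) 1 := fun t =>
    ⟨le_max_left _ _, max_le zero_le_one (min_le_right _ _)⟩
  have hReq : ∀ t ∈ Set.Icc (0:ℝ) 1, R t = r t := by
    intro t ht
    simp only [hR]
    rw [min_eq_left ht.2, max_eq_right ht.1]
  have hRmono : Monotone R := by
    intro a b hab
    exact hrm.monotoneOn (hclamp a) (hclamp b)
      (max_le_max le_rfl (min_le_min hab le_rfl))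
  have hRmeas : Measurable R := hRmono.measurable
  set f : ℝ → ℝ → ℝ := fun t y => if R t < y then 2 * t else 0 with hf
  have hSmeas : MeasurableSet {p : ℝ × ℝ | R p.1 < p.2} :=
    measurableSet_lt (hRmeas.comp measurable_fst) measurable_snd
  have hfmeas : Measurable (Function.uncurry f) := by
    have h : Function.uncurry f = fun p : ℝ × ℝ => if R p.1 < p.2 then 2 * p.1 else 0 := rfl
    rw [h]
    exact Measurable.ite hSmeas (measurable_fst.const_mul 2) measurable_const
  have hprod : μ.prod μ = (volume.prod volume).restrict ((Set.Ioc 0 1) ×ˢ (Set.Ioc 0 1)) :=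
    MeasureTheory.Measure.prod_restrict _ _
  have hint : Integrable (Function.uncurry f) (μ.prod μ) := by
    rw [hprod]
    haveI : IsFiniteMeasure
        ((volume.prod volume).restrict ((Set.Ioc (0:ℝ) 1) ×ˢ (Set.Ioc (0:ℝ) 1))) := by
      constructor
      rw [Measure.restrict_apply_univ, Measure.prod_prod, Real.volume_Ioc]
      exact ENNReal.mul_lt_top (by simp) (by simp)
    refine Integrable.mono' (integrable_const 2) hfmeas.aestronglyMeasurable ?_
    refine ae_restrict_of_forall_mem (measurableSet_Ioc.prod measurableSet_Ioc) ?_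
    rintro ⟨t, y⟩ ⟨ht, _⟩
    simp only [Function.uncurry, hf]
    split
    · rw [Real.norm_eq_abs, abs_of_nonneg (by nlinarith [ht.1.le] : (0:ℝ) ≤ 2 * t)]
      nlinarith [ht.2]
    · simp
  -- inner integral in y
  have hA : ∀ t ∈ Set.Ioc (0:ℝ) 1, ∫ y, f t y ∂μ = 2 * t * (1 - r t) := by
    intro t ht
    have htI : t ∈ Set.Icc (0:ℝ) 1 := ⟨ht.1.le, ht.2⟩
    have hc : r t ∈ Set.Icc (0:ℝ) 1 := hmaps htI
    have h1 : (fun y => f t y) = Set.indicator (Set.Ioi (r t)) (fun _ => 2 * t) := by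
      funext y
      simp [hf, Set.indicator_apply, hReq t htI, Set.mem_Ioi]
    rw [h1, MeasureTheory.integral_indicator measurableSet_Ioi, hμ,
      Measure.restrict_restrict measurableSet_Ioi]
    have hset : Set.Ioi (r t) ∩ Set.Ioc 0 1 = Set.Ioc (r t) 1 := by
      ext y
      simp only [Set.mem_inter_iff, Set.mem_Ioi, Set.mem_Ioc]
      constructor
      · rintro ⟨h1', h2', h3'⟩; exact ⟨h1', h3'⟩
      · rintro ⟨h1', h2'⟩; exact ⟨h1', lt_of_le_of_lt hc.1 h1', h2'⟩
    rw [hset, setIntegral_const, measureReal_def, Real.volume_Ioc,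
      ENNReal.toReal_ofReal (by linarith [hc.2])]
    simp only [smul_eq_mul]
    ring
  -- inner integral in t
  have hB : ∀ y ∈ Set.Ioc (0:ℝ) 1, ∫ t, f t y ∂μ = rinv y ^ 2 := by
    intro y hy
    have hyI : y ∈ Set.Icc (0:ℝ) 1 := ⟨hy.1.le, hy.2⟩
    have hd : rinv y ∈ Set.Icc (0:ℝ) 1 := hrimaps hyI
    have h1 : (fun t => f t y) = Set.indicator {t : ℝ | R t < y} (fun t => 2 * t) := by
      funext t
      simp [hf, Set.indicator_apply, Set.mem_setOf_eq]
    have hSm : MeasurableSet {t : ℝ | R t < y} := measurableSet_lt hRmeas measurable_const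
    rw [h1, MeasureTheory.integral_indicator hSm, hμ, Measure.restrict_restrict hSm]
    have hset : {t : ℝ | R t < y} ∩ Set.Ioc 0 1 = Set.Ioo 0 (rinv y) := by
      ext t
      simp only [Set.mem_inter_iff, Set.mem_setOf_eq, Set.mem_Ioc, Set.mem_Ioo]
      constructor
      · rintro ⟨hlt, h0, h1'⟩
        have htI : t ∈ Set.Icc (0:ℝ) 1 := ⟨h0.le, h1'⟩
        rw [hReq t htI] at hlt
        refine ⟨h0, (hrm.lt_iff_lt htI hd).1 ?_⟩
        rw [hinv2 y hyI]
        exact hlt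
      · rintro ⟨h0, hlt⟩
        have htI : t ∈ Set.Icc (0:ℝ) 1 := ⟨h0.le, le_trans hlt.le hd.2⟩
        refine ⟨?_, h0, htI.2⟩
        rw [hReq t htI]
        have h2 : r t < r (rinv y) := hrm htI hd hlt
        rwa [hinv2 y hyI] at h2
    rw [hset, ← MeasureTheory.integral_Ioc_eq_integral_Ioo,
      ← intervalIntegral.integral_of_le hd.1, intervalIntegral.integral_const_mul,
      integral_id]
    ring
  -- integrability of t * r t
  have hrnn : ∀ x ∈ Set.Icc (0:ℝ) 1, 0 ≤ r x := fun x hx => (hmaps hx).1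
  have hint2 : IntervalIntegrable (fun t => t * r t) volume 0 1 := by
    apply MonotoneOn.intervalIntegrable
    rw [Set.uIcc_of_le zero_le_one]
    intro a ha b hb hab
    exact mul_le_mul hab (hrm.monotoneOn ha hb hab) (hrnn a ha) hb.1
  have swap : ∫ t, ∫ y, f t y ∂μ ∂μ = ∫ y, ∫ t, f t y ∂μ ∂μ :=
    MeasureTheory.integral_integral_swap hint
  calc ∫ y in (0:ℝ)..1, rinv y ^ 2
      = ∫ y in Set.Ioc (0:ℝ) 1, rinv y ^ 2 := intervalIntegral.integral_of_le zero_le_one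
    _ = ∫ y, (∫ t, f t y ∂μ) ∂μ := by
        rw [hμ]
        exact (setIntegral_congr_fun measurableSet_Ioc (fun y hy => (hB y hy).symm))
    _ = ∫ t, (∫ y, f t y ∂μ) ∂μ := swap.symm
    _ = ∫ t in Set.Ioc (0:ℝ) 1, (2 * t * (1 - r t)) := by
        rw [hμ]
        exact setIntegral_congr_fun measurableSet_Ioc hA
    _ = ∫ t in (0:ℝ)..1, 2 * t * (1 - r t) := (intervalIntegral.integral_of_le zero_le_one).symm
    _ = 1 - 2 * ∫ t in (0:ℝ)..1, t * r t := by
        rw [intervalIntegral.integral_congr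
          (g := fun t => 2 * t - 2 * (t * r t)) (fun t _ => by ring)]
        have hlin : IntervalIntegrable (fun t : ℝ => 2 * t) MeasureTheory.volume 0 1 := by
          apply Continuous.intervalIntegrable
          fun_prop
        rw [intervalIntegral.integral_sub hlin (hint2.const_mul 2)]
        rw [intervalIntegral.integral_const_mul, intervalIntegral.integral_const_mul,
          integral_id]
        ring

open MeasureTheory in
lemma wqt_expand (s : ℝ → ℝ)
    (h1 : IntervalIntegrable (fun x => s x ^ 2) volume 0 1)
    (h2 : IntervalIntegrable (fun x => x * s x) volume 0 1) :
    ∫ x in (0:ℝ)..1, (s x - x) ^ 2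
      = (∫ x in (0:ℝ)..1, s x ^ 2) - 2 * (∫ x in (0:ℝ)..1, x * s x) + 1 / 3 := by
  rw [intervalIntegral.integral_congr
    (g := fun x => (s x ^ 2 - 2 * (x * s x)) + x ^ 2) (fun x _ => by ring)]
  rw [intervalIntegral.integral_add (h1.sub (h2.const_mul 2))
    ((continuous_pow 2).intervalIntegrable 0 1)]
  rw [intervalIntegral.integral_sub h1 (h2.const_mul 2),
    intervalIntegral.integral_const_mul, integral_pow]
  norm_num

/-- Symmetry of the asymptotic WQT: for a continuous strictly increasing bijection
`r : [0,1] → [0,1]` with inverse `rinv`, `∫₀¹ (r x − x)² dx = ∫₀¹ (rinv x − x)² dx`. -/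
theorem wqt_symmetric (r rinv : ℝ → ℝ)
    (hrc : ContinuousOn r (Set.Icc 0 1))
    (hrm : StrictMonoOn r (Set.Icc 0 1))
    (hmaps : Set.MapsTo r (Set.Icc 0 1) (Set.Icc 0 1))
    (hr0 : r 0 = 0) (hr1 : r 1 = 1)
    (hinv1 : ∀ x ∈ Set.Icc (0:ℝ) 1, rinv (r x) = x)
    (hinv2 : ∀ y ∈ Set.Icc (0:ℝ) 1, r (rinv y) = y) :
    ∫ x in (0:ℝ)..1, (r x - x) ^ 2 = ∫ x in (0:ℝ)..1, (rinv x - x) ^ 2 := by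
  -- rinv maps [0,1] to [0,1] (via surjectivity of r from IVT)
  have hsurj : Set.Icc (0:ℝ) 1 ⊆ r '' Set.Icc 0 1 := by
    have h := intermediate_value_Icc zero_le_one hrc
    rwa [hr0, hr1] at h
  have hrimaps : Set.MapsTo rinv (Set.Icc 0 1) (Set.Icc 0 1) := by
    intro y hy
    obtain ⟨x, hx, hrx⟩ := hsurj hy
    rw [← hrx, hinv1 x hx]
    exact hx
  have hrinvm : StrictMonoOn rinv (Set.Icc 0 1) := by
    intro a ha b hb hab
    refine (hrm.lt_iff_lt (hrimaps ha) (hrimaps hb)).1 ?_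
    rw [hinv2 a ha, hinv2 b hb]
    exact hab
  have key1 := wqt_key r rinv hrm hmaps hinv2 hrimaps
  have key2 := wqt_key rinv r hrinvm hrimaps hinv1 hmaps
  -- integrability
  have hrnn : ∀ x ∈ Set.Icc (0:ℝ) 1, 0 ≤ r x := fun x hx => (hmaps hx).1
  have hrinn : ∀ x ∈ Set.Icc (0:ℝ) 1, 0 ≤ rinv x := fun x hx => (hrimaps hx).1
  have hI1 : IntervalIntegrable (fun x => r x ^ 2) MeasureTheory.volume 0 1 := by
    apply MonotoneOn.intervalIntegrable
    rw [Set.uIcc_of_le zero_le_one]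
    intro a ha b hb hab
    exact pow_le_pow_left₀ (hrnn a ha) (hrm.monotoneOn ha hb hab) 2
  have hI2 : IntervalIntegrable (fun x => x * r x) MeasureTheory.volume 0 1 := by
    apply MonotoneOn.intervalIntegrable
    rw [Set.uIcc_of_le zero_le_one]
    intro a ha b hb hab
    exact mul_le_mul hab (hrm.monotoneOn ha hb hab) (hrnn a ha) hb.1
  have hI3 : IntervalIntegrable (fun x => rinv x ^ 2) MeasureTheory.volume 0 1 := by
    apply MonotoneOn.intervalIntegrable
    rw [Set.uIcc_of_le zero_le_one]
    intro a ha b hb hab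
    exact pow_le_pow_left₀ (hrinn a ha) (hrinvm.monotoneOn ha hb hab) 2
  have hI4 : IntervalIntegrable (fun x => x * rinv x) MeasureTheory.volume 0 1 := by
    apply MonotoneOn.intervalIntegrable
    rw [Set.uIcc_of_le zero_le_one]
    intro a ha b hb hab
    exact mul_le_mul hab (hrinvm.monotoneOn ha hb hab) (hrinn a ha) hb.1
  rw [wqt_expand r hI1 hI2, wqt_expand rinv hI3 hI4, key1, key2]
  ring
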